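/- For every positive integer q, φ(q) - φ(q-1) ≥ 2e, where φ(x) = 1 + 2(x+1)(1+1/x)^x for x > 0 and φ(0) is defined as 3 (its limit as x → 0⁺). -/

import Mathlib

open Real Set Filter Topology

noncomputable def phi (x : ℝ) : ℝ :=
  if x = 0 then 3 else 1 + 2 * (x + 1) * (1 + 1 / x) ^ x

lemma two_log_le {t : ℝ} (ht : 1 ≤ t) : 2 * Real.log t ≤ t - 1/t := by
  set H : ℝ → ℝ := fun t => t - 1/t - 2 * Real.log t with hH
  have key : ∀ x ∈ Ici (1:ℝ), HasDerivAt H (1 + 1/x^2 - 2 * x⁻¹) x := by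
    intro x hx
    have hx0 : x ≠ 0 := by intro h; simp [h] at hx; linarith
    have h1 : HasDerivAt (fun y : ℝ => 1/y) (-(1/x^2)) x := by
      simpa using (hasDerivAt_inv hx0)
    have h2 : HasDerivAt Real.log x⁻¹ x := Real.hasDerivAt_log hx0
    have := ((hasDerivAt_id x).sub h1).sub ((h2.const_mul 2))
    refine this.congr_deriv ?_
    ring
  have hmono : MonotoneOn H (Ici 1) := by
    apply monotoneOn_of_deriv_nonneg (convex_Ici 1)
    · exact fun x hx => ((key x hx).continuousAt.continuousWithinAt)
    · intro x hx
      rw [interior_Ici] at hx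
      exact ((key x (Ioi_subset_Ici_self hx)).differentiableAt.differentiableWithinAt)
    · intro x hx
      rw [interior_Ici] at hx
      rw [(key x (Ioi_subset_Ici_self hx)).deriv]
      have hx0 : (0:ℝ) < x := lt_trans one_pos hx
      have : (0:ℝ) ≤ (1 - x⁻¹)^2 := sq_nonneg _
      have hinv : x⁻¹ ^ 2 = 1/x^2 := by field_simp
      nlinarith [sq_nonneg (1 - x⁻¹)]
  have h1 : H 1 ≤ H t := hmono (by simp) ht ht
  have : H 1 = 0 := by simp [hH]
  rw [this] at h1
  simp only [hH] at h1
  linarith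

lemma log_le_inv_sqrt {x : ℝ} (hx : 0 < x) :
    Real.log (x+1) - Real.log x ≤ 1 / (Real.sqrt x * Real.sqrt (x+1)) := by
  have hx1 : (0:ℝ) < x + 1 := by linarith
  set a := Real.sqrt x with ha
  set b := Real.sqrt (x+1) with hb
  have ha0 : 0 < a := Real.sqrt_pos.2 hx
  have hb0 : 0 < b := Real.sqrt_pos.2 hx1
  have ha2 : a^2 = x := Real.sq_sqrt hx.le
  have hb2 : b^2 = x + 1 := Real.sq_sqrt hx1.le
  have hab : 1 ≤ b / a := by
    rw [le_div_iff₀ ha0, one_mul]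
    exact Real.sqrt_le_sqrt (by linarith)
  have h := two_log_le hab
  have hlog : Real.log (b/a) = (Real.log (x+1) - Real.log x) / 2 := by
    rw [Real.log_div (ne_of_gt hb0) (ne_of_gt ha0), hb, ha,
      Real.log_sqrt hx.le, Real.log_sqrt hx1.le]
    ring
  rw [hlog] at h
  have hrhs : b/a - 1/(b/a) = 1 / (a * b) := by
    field_simp
    nlinarith
  rw [hrhs] at h
  linarith

lemma ell_pos {x : ℝ} (hx : 0 < x) : 0 < Real.log (x+1) - Real.log x :=
  sub_pos.2 (Real.log_lt_log hx (lt_add_one x))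

noncomputable def Ff (x : ℝ) : ℝ := Real.exp ((x+1) * Real.log (x+1) - x * Real.log x)

noncomputable def Gg (x : ℝ) : ℝ :=
  ((x+1) * Real.log (x+1) - x * Real.log x) + Real.log (Real.log (x+1) - Real.log x)

lemma hasDerivAt_ell {x : ℝ} (hx : 0 < x) :
    HasDerivAt (fun y => Real.log (y+1) - Real.log y) (1/(x+1) - 1/x) x := by
  have h1 : HasDerivAt (fun y : ℝ => y + 1) 1 x := (hasDerivAt_id x).add_const 1
  have hx1 : (0:ℝ) < x + 1 := by linarith
  have h2 : HasDerivAt (fun y : ℝ => Real.log (y+1)) (1/(x+1)) x := by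
    simpa using h1.log (ne_of_gt hx1)
  have h3 : HasDerivAt Real.log (1/x) x := by
    simpa [one_div] using Real.hasDerivAt_log (ne_of_gt hx)
  exact h2.sub h3

lemma hasDerivAt_Gg {x : ℝ} (hx : 0 < x) :
    HasDerivAt Gg ((Real.log (x+1) - Real.log x)
      + (1/(x+1) - 1/x) / (Real.log (x+1) - Real.log x)) x := by
  have hx1 : (0:ℝ) < x + 1 := by linarith
  have h1 : HasDerivAt (fun y : ℝ => y + 1) 1 x := (hasDerivAt_id x).add_const 1
  have h2 : HasDerivAt (fun y : ℝ => Real.log (y+1)) (1/(x+1)) x := by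
    simpa using h1.log (ne_of_gt hx1)
  have h3 : HasDerivAt Real.log (1/x) x := by
    simpa [one_div] using Real.hasDerivAt_log (ne_of_gt hx)
  have hA : HasDerivAt (fun y : ℝ => (y+1) * Real.log (y+1))
      (1 * Real.log (x+1) + (x+1) * (1/(x+1))) x := h1.mul h2
  have hB : HasDerivAt (fun y : ℝ => y * Real.log y)
      (1 * Real.log x + x * (1/x)) x := (hasDerivAt_id x).mul h3
  have hC : HasDerivAt (fun y : ℝ => Real.log (Real.log (y+1) - Real.log y))
      ((1/(x+1) - 1/x) / (Real.log (x+1) - Real.log x)) x :=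
    (hasDerivAt_ell hx).log (ne_of_gt (ell_pos hx))
  have := (hA.sub hB).add hC
  refine this.congr_deriv ?_
  have : (x+1) * (1/(x+1)) = 1 := by field_simp
  have h' : x * (1/x) = 1 := by field_simp
  rw [this, h']
  ring

lemma deriv_Gg_nonpos {x : ℝ} (hx : 0 < x) :
    (Real.log (x+1) - Real.log x)
      + (1/(x+1) - 1/x) / (Real.log (x+1) - Real.log x) ≤ 0 := by
  have hx1 : (0:ℝ) < x + 1 := by linarith
  set L := Real.log (x+1) - Real.log x with hL
  have hL0 : 0 < L := ell_pos hx
  have hsq : L^2 ≤ 1/(x*(x+1)) := by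
    have h := log_le_inv_sqrt hx
    have hs : (Real.sqrt x * Real.sqrt (x+1))^2 = x*(x+1) := by
      rw [mul_pow, Real.sq_sqrt hx.le, Real.sq_sqrt hx1.le]
    have hpos : 0 < Real.sqrt x * Real.sqrt (x+1) :=
      mul_pos (Real.sqrt_pos.2 hx) (Real.sqrt_pos.2 hx1)
    calc L^2 ≤ (1/(Real.sqrt x * Real.sqrt (x+1)))^2 := by
            apply pow_le_pow_left₀ hL0.le h
         _ = 1/(x*(x+1)) := by rw [div_pow, one_pow, hs]
  have key : L + (1/(x+1) - 1/x) / L = (L^2 - 1/(x*(x+1))) / L := by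
    field_simp
    ring
  rw [key]
  exact div_nonpos_of_nonpos_of_nonneg (by linarith) hL0.le

lemma antitoneOn_Gg : AntitoneOn Gg (Ioi 0) := by
  apply antitoneOn_of_deriv_nonpos (convex_Ioi 0)
  · exact fun x hx => ((hasDerivAt_Gg hx).continuousAt.continuousWithinAt)
  · intro x hx
    rw [interior_Ioi] at hx
    exact (hasDerivAt_Gg hx).differentiableAt.differentiableWithinAt
  · intro x hx
    rw [interior_Ioi] at hx
    rw [(hasDerivAt_Gg hx).deriv]
    exact deriv_Gg_nonpos hx

lemma tendsto_xell :
    Tendsto (fun x : ℝ => x * (Real.log (x+1) - Real.log x)) atTop (𝓝 1) := by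
  have h := tendsto_one_add_div_rpow_exp 1
  have hlog : Tendsto (fun x : ℝ => Real.log ((1 + 1/x) ^ x)) atTop (𝓝 1) := by
    have := (Real.continuousAt_log (Real.exp_pos 1).ne').tendsto.comp h
    simpa [Function.comp_def] using this
  apply hlog.congr'
  filter_upwards [eventually_gt_atTop (0:ℝ)] with x hx
  have hx1 : (0:ℝ) < 1 + 1/x := by positivity
  rw [Real.log_rpow hx1]
  have : (1:ℝ) + 1/x = (x+1)/x := by field_simp
  rw [this, Real.log_div (by linarith) (ne_of_gt hx)]

lemma tendsto_ell :
    Tendsto (fun x : ℝ => Real.log (x+1) - Real.log x) atTop (𝓝 0) := by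
  have h1 : Tendsto (fun x : ℝ => 1 + 1/x) atTop (𝓝 1) := by
    have := tendsto_one_div_atTop_nhds_zero_nat (𝕜 := ℝ)
    have h := tendsto_inv_atTop_zero (𝕜 := ℝ)
    have := tendsto_const_nhds (α := ℝ) (x := (1:ℝ)) (f := atTop)
    simpa using this.add (tendsto_inv_atTop_zero (𝕜 := ℝ))
  have h2 : Tendsto (fun x : ℝ => Real.log (1 + 1/x)) atTop (𝓝 0) := by
    have := (Real.continuousAt_log one_ne_zero).tendsto.comp h1
    simpa [Function.comp_def] using this
  apply h2.congr'
  filter_upwards [eventually_gt_atTop (0:ℝ)] with x hx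
  have : (1:ℝ) + 1/x = (x+1)/x := by field_simp
  rw [this, Real.log_div (by linarith) (ne_of_gt hx)]

lemma tendsto_Gg : Tendsto Gg atTop (𝓝 1) := by
  have hFl : Tendsto (fun x : ℝ =>
      Real.exp (x * (Real.log (x+1) - Real.log x))
        * ((x+1) * (Real.log (x+1) - Real.log x))) atTop (𝓝 (Real.exp 1)) := by
    have h1 : Tendsto (fun x : ℝ => Real.exp (x * (Real.log (x+1) - Real.log x)))
        atTop (𝓝 (Real.exp 1)) := (Real.continuous_exp.tendsto 1).comp tendsto_xell
    have h2 : Tendsto (fun x : ℝ => (x+1) * (Real.log (x+1) - Real.log x)) atTop (𝓝 1) := by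
      have := tendsto_xell.add tendsto_ell
      simp only [add_zero] at this
      apply this.congr
      intro x; ring
    simpa using h1.mul h2
  have hlog : Tendsto (fun x : ℝ => Real.log
      (Real.exp (x * (Real.log (x+1) - Real.log x))
        * ((x+1) * (Real.log (x+1) - Real.log x)))) atTop (𝓝 1) := by
    have := (Real.continuousAt_log (Real.exp_pos 1).ne').tendsto.comp hFl
    simpa [Function.comp_def] using this
  apply hlog.congr'
  filter_upwards [eventually_gt_atTop (0:ℝ)] with x hx
  have hx1 : (0:ℝ) < x + 1 := by linarith
  have hL : 0 < Real.log (x+1) - Real.log x := ell_pos hx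
  rw [Real.log_mul (Real.exp_ne_zero _) (by positivity), Real.log_exp,
    Real.log_mul (ne_of_gt hx1) (ne_of_gt hL)]
  show _ = Gg x
  unfold Gg
  ring

lemma Gg_ge_one {x : ℝ} (hx : 0 < x) : 1 ≤ Gg x := by
  apply le_of_tendsto tendsto_Gg
  filter_upwards [eventually_ge_atTop x] with y hy
  exact antitoneOn_Gg hx (lt_of_lt_of_le hx hy) hy

lemma key_ineq {x : ℝ} (hx : 0 < x) :
    Real.exp 1 ≤ Ff x * (Real.log (x+1) - Real.log x) := by
  have hL : 0 < Real.log (x+1) - Real.log x := ell_pos hx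
  have : Ff x * (Real.log (x+1) - Real.log x) = Real.exp (Gg x) := by
    rw [Gg, Real.exp_add, Ff, Real.exp_log hL]
  rw [this]
  exact Real.exp_le_exp.2 (Gg_ge_one hx)

lemma hasDerivAt_Ff {x : ℝ} (hx : 0 < x) :
    HasDerivAt Ff (Ff x * (Real.log (x+1) - Real.log x)) x := by
  have hx1 : (0:ℝ) < x + 1 := by linarith
  have h1 : HasDerivAt (fun y : ℝ => y + 1) 1 x := (hasDerivAt_id x).add_const 1
  have h2 : HasDerivAt (fun y : ℝ => Real.log (y+1)) (1/(x+1)) x := by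
    simpa using h1.log (ne_of_gt hx1)
  have h3 : HasDerivAt Real.log (1/x) x := by
    simpa [one_div] using Real.hasDerivAt_log (ne_of_gt hx)
  have hA : HasDerivAt (fun y : ℝ => (y+1) * Real.log (y+1))
      (1 * Real.log (x+1) + (x+1) * (1/(x+1))) x := h1.mul h2
  have hB : HasDerivAt (fun y : ℝ => y * Real.log y)
      (1 * Real.log x + x * (1/x)) x := (hasDerivAt_id x).mul h3
  have := (hA.sub hB).exp
  refine this.congr_deriv ?_
  have e1 : (x+1) * (1/(x+1)) = 1 := by field_simp
  have e2 : x * (1/x) = 1 := by field_simp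
  rw [e1, e2]
  unfold Ff
  simp only [Pi.sub_apply]
  ring

lemma Ff_gap {a : ℝ} (ha : 0 < a) : Ff a + Real.exp 1 ≤ Ff (a+1) := by
  obtain ⟨c, hc, heq⟩ := exists_hasDerivAt_eq_slope Ff
    (fun x => Ff x * (Real.log (x+1) - Real.log x)) (by linarith : a < a + 1)
    (fun x hx => (hasDerivAt_Ff (by simp at hx; linarith [hx.1] : (0:ℝ) < x)).continuousAt.continuousWithinAt)
    (fun x hx => hasDerivAt_Ff (by simp at hx; linarith [hx.1]))
  have hc0 : 0 < c := by simp at hc; linarith [hc.1]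
  have := key_ineq hc0
  rw [heq] at this
  have h1 : a + 1 - a = (1:ℝ) := by ring
  rw [h1, div_one] at this
  linarith

lemma phi_eq {x : ℝ} (hx : 0 < x) : phi x = 1 + 2 * Ff x := by
  have hx1 : (0:ℝ) < x + 1 := by linarith
  rw [phi, if_neg (ne_of_gt hx)]
  have h1 : (1:ℝ) + 1/x = (x+1)/x := by field_simp
  have h2 : ((1:ℝ) + 1/x) ^ x = Real.exp (x * (Real.log (x+1) - Real.log x)) := by
    rw [Real.rpow_def_of_pos (by positivity), h1,
      Real.log_div (ne_of_gt hx1) (ne_of_gt hx)]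
    ring_nf
  rw [h2, Ff]
  have h3 : x + 1 = Real.exp (Real.log (x+1)) := (Real.exp_log hx1).symm
  nth_rewrite 1 [h3]
  rw [mul_assoc, ← Real.exp_add]
  ring_nf

theorem phi_gap (q : ℕ) (hq : 1 ≤ q) :
    phi q - phi (q - 1 : ℕ) ≥ 2 * Real.exp 1 := by
  rcases eq_or_lt_of_le hq with h1 | h2
  · -- q = 1
    rw [← h1]
    have h0 : ((1:ℕ) - 1 : ℕ) = 0 := rfl
    rw [h0]
    have hphi1 : phi 1 = 9 := by
      rw [phi, if_neg one_ne_zero]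
      norm_num
    have hphi0 : phi 0 = 3 := by
      simp [phi]
    push_cast
    rw [hphi1, hphi0]
    have := Real.exp_one_lt_d9
    linarith
  · -- q ≥ 2
    have hq2 : 2 ≤ q := h2
    have hcast : ((q - 1 : ℕ) : ℝ) = (q : ℝ) - 1 := by
      push_cast [hq]; ring
    have ha : (0:ℝ) < (q:ℝ) - 1 := by
      have : (2:ℝ) ≤ (q:ℝ) := by exact_mod_cast hq2
      linarith
    have hqpos : (0:ℝ) < (q:ℝ) := by linarith
    rw [hcast, phi_eq hqpos, phi_eq ha]
    have := Ff_gap ha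
    have he : (q:ℝ) - 1 + 1 = (q:ℝ) := by ring
    rw [he] at this
    linarith
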